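/- Let n ≥ 1, k ≤ n, let u, w ∈ ℝ^n with u_i > 0 and w_i > 0 for all i, let q ∈ (0,1), and let P_k = {p ∈ [0,1]^n : ∑_i p_i = k}. Suppose λ > 0 and p* ∈ P_k satisfies p*_i = min(1, λ · (w_i u_i^q)^{1/(1−q)}) for all i (and ∑_i p*_i = k). Then p* maximizes the weighted power mean welfare over P_k: for every p ∈ P_k, (∑_i w_i (u_i p_i)^q)^{1/q} ≤ (∑_i w_i (u_i p*_i)^q)^{1/q}. -/

import Mathlib

/-- The set of allocation policies distributing `k` resources among `n` individuals. -/
def Pk (n k : ℕ) : Set (Fin n → ℝ) :=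
  {p | (∀ i, 0 ≤ p i ∧ p i ≤ 1) ∧ ∑ i, p i = (k : ℝ)}

/-- Tangent-line bound for concave `x ↦ x^q`, `0 < q < 1`. -/
lemma tangent_rpow {q a x : ℝ} (hq0 : 0 < q) (hq1 : q < 1) (ha : 0 < a) (hx : 0 ≤ x) :
    x ^ q ≤ a ^ q + q * a ^ (q - 1) * (x - a) := by
  have h1 : x ^ q = a ^ q * (x / a) ^ q := by
    rw [← Real.mul_rpow ha.le (by positivity)]
    rw [mul_div_cancel₀ _ ha.ne']
  have hs : (-1 : ℝ) ≤ x / a - 1 := by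
    have : 0 ≤ x / a := by positivity
    linarith
  have hb := rpow_one_add_le_one_add_mul_self hs hq0.le hq1.le
  rw [add_sub_cancel] at hb
  have h2 : (x / a) ^ q ≤ 1 + q * (x / a - 1) := hb
  have h3 : a ^ q * (x / a) ^ q ≤ a ^ q * (1 + q * (x / a - 1)) :=
    mul_le_mul_of_nonneg_left h2 (by positivity)
  have h4 : a ^ q * (1 + q * (x / a - 1)) = a ^ q + q * a ^ (q - 1) * (x - a) := by
    have hpow : a ^ (q - 1) = a ^ q / a := by
      rw [Real.rpow_sub ha, Real.rpow_one]
    rw [hpow]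
    field_simp
  rw [h1]
  linarith [h3, h4.le]

theorem stmt_14 {n : ℕ} (hn : 0 < n) (k : ℕ) (hk : k ≤ n)
    (u w : Fin n → ℝ) (hu : ∀ i, 0 < u i) (hw : ∀ i, 0 < w i)
    (q : ℝ) (hq : q ∈ Set.Ioo (0 : ℝ) 1)
    (lam : ℝ) (hlam : 0 < lam)
    (pstar : Fin n → ℝ) (hpstar : pstar ∈ Pk n k)
    (hform : ∀ i, pstar i = min 1 (lam * (w i * u i ^ q) ^ (1 / (1 - q)))) :
    ∀ p ∈ Pk n k,
      (∑ i, w i * (u i * p i) ^ q) ^ (1 / q)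
        ≤ (∑ i, w i * (u i * pstar i) ^ q) ^ (1 / q) := by
  obtain ⟨hq0, hq1⟩ := hq
  have h1q : (0:ℝ) < 1 - q := by linarith
  rintro p ⟨hp01, hpsum⟩
  obtain ⟨hps01, hpssum⟩ := hpstar
  -- positivity of pstar
  have hpspos : ∀ i, 0 < pstar i := by
    intro i
    rw [hform i]
    have hwi := hw i; have hui := hu i
    have : 0 < lam * (w i * u i ^ q) ^ (1 / (1 - q)) := by positivity
    exact lt_min one_pos this
  -- key per-coordinate inequality
  have key : ∀ i, w i * (u i * p i) ^ q ≤
      w i * (u i * pstar i) ^ q + q * lam ^ (q - 1) * (p i - pstar i) := by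
    intro i
    have hwi := hw i; have hui := hu i
    have hpi0 := (hp01 i).1
    have hA : 0 < w i * u i ^ q := by positivity
    set A := w i * u i ^ q with hAdef
    -- rewrite both sides using mul_rpow
    have hL : w i * (u i * p i) ^ q = A * p i ^ q := by
      rw [Real.mul_rpow hui.le hpi0, hAdef]; ring
    have hR : w i * (u i * pstar i) ^ q = A * pstar i ^ q := by
      rw [Real.mul_rpow hui.le (hpspos i).le, hAdef]; ring
    have htan := tangent_rpow hq0 hq1 (hpspos i) hpi0
    have h5 : A * p i ^ q ≤ A * pstar i ^ q + q * (A * pstar i ^ (q - 1)) * (p i - pstar i) := by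
      have := mul_le_mul_of_nonneg_left htan hA.le
      nlinarith [this]
    -- now show A * pstar i ^ (q-1) * (p i - pstar i) ≤ lam^(q-1) * (p i - pstar i)
    have hmult : A * pstar i ^ (q - 1) * (p i - pstar i) ≤ lam ^ (q - 1) * (p i - pstar i) := by
      rcases le_or_gt 1 (lam * A ^ (1 / (1 - q))) with hcase | hcase
      · -- pstar i = 1
        have hps1 : pstar i = 1 := by rw [hform i]; exact min_eq_left hcase
        have hAge : lam ^ (q - 1) ≤ A := by
          have h1 : lam⁻¹ ≤ A ^ (1 / (1 - q)) := by
            rw [inv_le_iff_one_le_mul₀' hlam]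
            linarith [hcase]
          have h2 : (lam⁻¹) ^ (1 - q) ≤ (A ^ (1 / (1 - q))) ^ (1 - q) :=
            Real.rpow_le_rpow (by positivity) h1 h1q.le
          rw [← Real.rpow_mul hA.le, one_div, inv_mul_cancel₀ h1q.ne', Real.rpow_one] at h2
          calc lam ^ (q - 1) = (lam⁻¹) ^ (1 - q) := by
                rw [← Real.rpow_neg_one lam, ← Real.rpow_mul hlam.le]; ring_nf
            _ ≤ A := h2
        have hfac : p i - 1 ≤ 0 := by
          have := (hp01 i).2; linarith
        rw [hps1, Real.one_rpow, mul_one]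
        exact mul_le_mul_of_nonpos_right hAge hfac
      · -- pstar i = lam * A^(1/(1-q)), equality case
        have hps : pstar i = lam * A ^ (1 / (1 - q)) := by
          rw [hform i]; exact min_eq_right hcase.le
        have heq : A * pstar i ^ (q - 1) = lam ^ (q - 1) := by
          rw [hps, Real.mul_rpow hlam.le (by positivity),
            ← Real.rpow_mul hA.le]
          have : 1 / (1 - q) * (q - 1) = -1 := by field_simp; ring
          rw [this, Real.rpow_neg_one]
          field_simp
        rw [heq]
    have hfinal : q * (A * pstar i ^ (q - 1)) * (p i - pstar i)
        ≤ q * lam ^ (q - 1) * (p i - pstar i) := by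
      have := mul_le_mul_of_nonneg_left hmult hq0.le
      nlinarith [this]
    rw [hL, hR]; linarith
  -- sum up
  have hsum : ∑ i, w i * (u i * p i) ^ q ≤ ∑ i, w i * (u i * pstar i) ^ q := by
    calc ∑ i, w i * (u i * p i) ^ q
        ≤ ∑ i, (w i * (u i * pstar i) ^ q + q * lam ^ (q - 1) * (p i - pstar i)) :=
          Finset.sum_le_sum fun i _ => key i
      _ = ∑ i, w i * (u i * pstar i) ^ q + q * lam ^ (q - 1) * (∑ i, p i - ∑ i, pstar i) := by
          rw [Finset.sum_add_distrib, ← Finset.mul_sum, Finset.sum_sub_distrib]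
      _ = ∑ i, w i * (u i * pstar i) ^ q := by
          rw [hpsum, hpssum]; ring
  apply Real.rpow_le_rpow _ hsum (by positivity)
  apply Finset.sum_nonneg
  intro i _
  have := (hp01 i).1; have := (hu i); have := (hw i)
  positivity
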